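/- If Σ is a presection in a connected stable translation quiver Γ, then Σ intersects every τ-orbit of Γ at least once. -/

import Mathlib

/- STATEMENT 3: If Σ is a presection in a connected stable translation quiver Γ,
   then Σ intersects every τ-orbit of Γ at least once. -/

namespace Stmt3

theorem presection_meets_every_orbit
    {V : Type*} (Arrow : V → V → Prop) (τ : Equiv.Perm V)
    -- stable translation quiver: mesh conditions
    (hmesh₁ : ∀ x y, Arrow x y → Arrow (τ y) x)
    (hmesh₂ : ∀ x y, Arrow x y → Arrow y (τ.symm x))
    -- Γ is connected
    (hconn : ∀ x y : V, Relation.ReflTransGen (fun a b => Arrow a b ∨ Arrow b a) x y)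
    (S : Set V)
    -- Σ is a nonempty connected full subquiver
    (hne : S.Nonempty)
    (hSconn : ∀ x ∈ S, ∀ y ∈ S,
      Relation.ReflTransGen (fun a b => a ∈ S ∧ b ∈ S ∧ (Arrow a b ∨ Arrow b a)) x y)
    -- Σ is a presection: (P1) and (P2)
    (hP1 : ∀ x y, Arrow x y → x ∈ S → y ∈ S ∨ τ y ∈ S)
    (hP2 : ∀ x y, Arrow x y → y ∈ S → x ∈ S ∨ τ.symm x ∈ S) :
    -- Σ meets the τ-orbit of every vertex
    ∀ y : V, ∃ n : ℤ, (τ ^ n) y ∈ S := by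
  -- τ-equivariance of Arrow
  have eadd : ∀ (n : ℤ) (z : V), (τ ^ (n + 1)) z = τ ((τ ^ n) z) := by
    intro n z
    rw [add_comm, zpow_add, zpow_one, Equiv.Perm.mul_apply]
  have esub : ∀ (n : ℤ) (z : V), (τ ^ (n - 1)) z = τ.symm ((τ ^ n) z) := by
    intro n z
    rw [sub_eq_add_neg, add_comm, zpow_add, Equiv.Perm.mul_apply, zpow_neg_one,
      Equiv.Perm.inv_def]
  have hstep : ∀ x y, Arrow x y → Arrow (τ x) (τ y) := fun x y h =>
    hmesh₁ _ _ (hmesh₁ _ _ h)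
  have hstep' : ∀ x y, Arrow x y → Arrow (τ.symm x) (τ.symm y) := fun x y h =>
    hmesh₂ _ _ (hmesh₂ _ _ h)
  have hequiv : ∀ (n : ℤ) (x y : V), Arrow x y → Arrow ((τ ^ n) x) ((τ ^ n) y) := by
    intro n
    induction n using Int.induction_on with
    | zero => simp only [zpow_zero, Equiv.Perm.coe_one, id_eq]; exact fun x y h => h
    | succ k ih =>
      intro x y h
      rw [eadd, eadd]
      exact hstep _ _ (ih x y h)
    | pred k ih =>
      intro x y h
      have e : ∀ z : V, (τ ^ (-(k : ℤ) - 1)) z = τ.symm ((τ ^ (-(k : ℤ))) z) := esub _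
      rw [e, e]
      exact hstep' _ _ (ih x y h)
  -- the set of vertices whose orbit meets S is closed under the edge relation
  have hclosed : ∀ x y : V, (Arrow x y ∨ Arrow y x) →
      (∃ n : ℤ, (τ ^ n) x ∈ S) → (∃ n : ℤ, (τ ^ n) y ∈ S) := by
    rintro x y (h | h) ⟨n, hn⟩
    · rcases hP1 _ _ (hequiv n x y h) hn with h' | h'
      · exact ⟨n, h'⟩
      · exact ⟨n + 1, by rw [eadd]; exact h'⟩
    · rcases hP2 _ _ (hequiv n y x h) hn with h' | h'
      · exact ⟨n, h'⟩
      · exact ⟨n - 1, by rw [esub]; exact h'⟩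
  intro y
  obtain ⟨x₀, hx₀⟩ := hne
  have := hconn x₀ y
  induction this with
  | refl => exact ⟨0, by simpa using hx₀⟩
  | tail _ hbc ih => exact hclosed _ _ hbc ih

end Stmt3
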